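/- Let G be a finite group, p a prime, and S a subgroup of G whose index [G:S] is not divisible by p. Then for every k, the restriction map H^k(G; ℤ) → H^k(S; ℤ) induced by the inclusion S ↪ G is injective on the p-primary part: if x ∈ H^k(G; ℤ) has order a power of p and restricts to 0 in H^k(S; ℤ), then x = 0. -/

import Mathlib

open CategoryTheory

/-- Restriction of an inhomogeneous `n`-cochain of `G` to a subgroup `S`. -/
noncomputable def resCochain (G : Type) [Group G] (S : Subgroup G) (n : ℕ) :
    ((Fin n → G) → ℤ) →ₗ[ℤ] ((Fin n → S) → ℤ) where
  toFun φ g := φ (fun i => (g i : G))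
  map_add' _ _ := rfl
  map_smul' _ _ := rfl

theorem coe_contractNth {G : Type} [Group G] {S : Subgroup G} {n : ℕ} (j : Fin (n + 1))
    (g : Fin (n + 1) → S) (i : Fin n) :
    ((Fin.contractNth j (· * ·) g i : S) : G) =
      Fin.contractNth j (· * ·) (fun k => (g k : G)) i := by
  unfold Fin.contractNth
  split_ifs <;> simp

/-- The restriction chain map on inhomogeneous cochain complexes. -/
noncomputable def resCochainMap (G : Type) [Group G] (S : Subgroup G) :
    groupCohomology.inhomogeneousCochains (Rep.trivial ℤ G ℤ) ⟶
      groupCohomology.inhomogeneousCochains (Rep.trivial ℤ S ℤ) where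
  f n := ModuleCat.ofHom (resCochain G S n)
  comm' i j hij := by
    obtain rfl : j = i + 1 := hij.symm
    refine ModuleCat.hom_ext (LinearMap.ext fun φ => funext fun g => ?_)
    show (groupCohomology.inhomogeneousCochains (Rep.trivial ℤ ↥S ℤ)).d i (i+1)
        (resCochain G S i φ) g
      = resCochain G S (i+1)
        ((groupCohomology.inhomogeneousCochains (Rep.trivial ℤ G ℤ)).d i (i+1) φ) g
    rw [groupCohomology.inhomogeneousCochains.d_def,
      groupCohomology.inhomogeneousCochains.d_def]
    simp only [inhomogeneousCochains.d_hom_apply, resCochain, LinearMap.coe_mk, AddHom.coe_mk,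
      Rep.trivial_ρ_apply]
    congr 1
    refine Finset.sum_congr rfl fun j _ => ?_
    exact congrArg _ (congrArg φ (funext fun i => coe_contractNth j g i))

namespace ResAux
set_option linter.unusedSectionVars false
set_option linter.unreachableTactic false
set_option linter.unusedTactic false

variable {H : Type} [Group H]

def del (i : ℕ) (x : ℕ → H) : ℕ → H := fun j => if j < i then x j else x (j+1)

def DD (r : ℕ) (F : (ℕ → H) → ℤ) : (ℕ → H) → ℤ :=
  fun x => ∑ i ∈ Finset.range r, (-1:ℤ)^i * F (del i x)

lemma del_comp {H' : Type} [Group H'] (f : H → H') (i : ℕ) (x : ℕ → H) :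
    del i (fun j => f (x j)) = fun j => f (del i x j) := by
  funext j; unfold del; split <;> rfl

def PP (Q : H → H) (i : ℕ) (x : ℕ → H) : ℕ → H :=
  fun j => if j ≤ i then Q (x j) else x (j-1)

def QQ (Q : H → H) (i : ℕ) (x : ℕ → H) : ℕ → H :=
  fun j => if j < i then Q (x j) else x j

def hh (Q : H → H) (r : ℕ) (F : (ℕ → H) → ℤ) : (ℕ → H) → ℤ :=
  fun x => ∑ i ∈ Finset.range r, (-1:ℤ)^i * F (PP Q i x)

variable (Q : H → H)

lemma R1 {i j : ℕ} (h : j ≤ i) (x : ℕ → H) :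
    del j (PP Q (i+1) x) = PP Q i (del j x) := by
  funext m
  simp only [del, PP]
  rcases lt_trichotomy m j with hm | hm | hm <;>
    split_ifs <;> (try rfl) <;> (try (congr 1; omega)) <;> omega

lemma R2 (i : ℕ) (x : ℕ → H) : del i (PP Q i x) = QQ Q i x := by
  funext m
  simp only [del, PP, QQ]
  split_ifs <;> (try rfl) <;> (try (congr 1; omega)) <;> omega

lemma R3 (i : ℕ) (x : ℕ → H) : del (i+1) (PP Q i x) = QQ Q (i+1) x := by
  funext m
  simp only [del, PP, QQ]
  split_ifs <;> (try rfl) <;> (try (congr 1; omega)) <;> omega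

lemma R4 {i j : ℕ} (h : i + 1 ≤ j) (x : ℕ → H) :
    del (j+1) (PP Q i x) = PP Q i (del j x) := by
  funext m
  simp only [del, PP]
  split_ifs <;> (try rfl) <;> (try (congr 1; omega)) <;> omega

def Dep (n : ℕ) (F : (ℕ → H) → ℤ) : Prop :=
  ∀ x y : ℕ → H, (∀ m, m ≤ n → x m = y m) → F x = F y

theorem key (n : ℕ) (F : (ℕ → H) → ℤ) (hdep : Dep n F)
    (hco : ∀ y, DD (n+2) F y = 0) (x : ℕ → H) :
    DD (n+1) (hh Q n F) x = F x - F (fun m => Q (x m)) := by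
  set t : ℕ → ℕ → ℤ := fun i j => (-1:ℤ)^i * ((-1:ℤ)^j * F (PP Q i (del j x))) with ht
  have hW' : ∑ i ∈ Finset.range (n+1), ∑ j ∈ Finset.range (n+2),
      (-1:ℤ)^i * ((-1:ℤ)^j * F (del j (PP Q i x))) = 0 := by
    have hW : ∑ i ∈ Finset.range (n+1), (-1:ℤ)^i * DD (n+2) F (PP Q i x) = 0 := by
      simp [hco]
    rw [← hW]
    refine Finset.sum_congr rfl fun i _ => ?_
    rw [DD, Finset.mul_sum]
  have hsplit : ∀ i ∈ Finset.range (n+1),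
      ∑ j ∈ Finset.range (n+2), (-1:ℤ)^i * ((-1:ℤ)^j * F (del j (PP Q i x)))
      = ((∑ j ∈ Finset.range i, (-1:ℤ)^i * ((-1:ℤ)^j * F (del j (PP Q i x))))
        + ∑ j ∈ Finset.Ico (i+2) (n+2), (-1:ℤ)^i * ((-1:ℤ)^j * F (del j (PP Q i x))))
        + (F (QQ Q i x) - F (QQ Q (i+1) x)) := by
    intro i hi
    rw [Finset.mem_range] at hi
    rw [Finset.range_eq_Ico,
      ← Finset.sum_Ico_consecutive _ (Nat.zero_le i) (by omega : i ≤ n+2),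
      Finset.sum_eq_sum_Ico_succ_bot (by omega : i < n+2),
      Finset.sum_eq_sum_Ico_succ_bot (by omega : i+1 < n+2),
      ← Finset.range_eq_Ico, R2, R3]
    have e1 : (-1:ℤ)^i * ((-1:ℤ)^i * F (QQ Q i x)) = F (QQ Q i x) := by
      rw [← mul_assoc, ← pow_add, Even.neg_one_pow (Even.add_self i), one_mul]
    have e2 : (-1:ℤ)^i * ((-1:ℤ)^(i+1) * F (QQ Q (i+1) x)) = -F (QQ Q (i+1) x) := by
      rw [← mul_assoc, ← pow_add, show i + (i+1) = 2*i+1 by ring, pow_succ, pow_mul]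
      norm_num
    rw [e1, e2]; ring
  rw [Finset.sum_congr rfl hsplit, Finset.sum_add_distrib, Finset.sum_add_distrib] at hW'
  -- telescoping part
  have htel : ∑ i ∈ Finset.range (n+1), (F (QQ Q i x) - F (QQ Q (i+1) x))
      = F x - F (fun m => Q (x m)) := by
    have h0 : QQ Q 0 x = x := by funext m; simp [QQ]
    have h1 : F (QQ Q (n+1) x) = F (fun m => Q (x m)) :=
      hdep _ _ (fun m hm => by simp [QQ, Nat.lt_succ_of_le hm])
    rw [Finset.sum_range_sub' (fun i => F (QQ Q i x)), h0, h1]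
  -- W1 part
  have hW1 : ∑ i ∈ Finset.range (n+1),
      ∑ j ∈ Finset.range i, (-1:ℤ)^i * ((-1:ℤ)^j * F (del j (PP Q i x)))
      = - ∑ i ∈ Finset.range n, ∑ j ∈ Finset.range (i+1), t i j := by
    rw [Finset.sum_range_succ' (fun i => ∑ j ∈ Finset.range i,
      (-1:ℤ)^i * ((-1:ℤ)^j * F (del j (PP Q i x)))) n]
    simp only [Finset.range_zero, Finset.sum_empty, add_zero]
    rw [← Finset.sum_neg_distrib]
    refine Finset.sum_congr rfl fun i _ => ?_
    rw [← Finset.sum_neg_distrib]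
    refine Finset.sum_congr rfl fun j hj => ?_
    rw [Finset.mem_range] at hj
    rw [R1 Q (by omega : j ≤ i)]
    simp only [ht, pow_succ]
    ring
  -- W4 part
  have hW4 : ∑ i ∈ Finset.range (n+1),
      ∑ j ∈ Finset.Ico (i+2) (n+2), (-1:ℤ)^i * ((-1:ℤ)^j * F (del j (PP Q i x)))
      = - ∑ i ∈ Finset.range (n+1), ∑ j ∈ Finset.Ico (i+1) (n+1), t i j := by
    rw [← Finset.sum_neg_distrib]
    refine Finset.sum_congr rfl fun i _ => ?_
    have hmap : Finset.Ico (i+2) (n+2) = (Finset.Ico (i+1) (n+1)).map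
        (addRightEmbedding 1) := by
      rw [Finset.map_add_right_Ico]
    rw [hmap, Finset.sum_map, ← Finset.sum_neg_distrib]
    refine Finset.sum_congr rfl fun j hj => ?_
    rw [Finset.mem_Ico] at hj
    simp only [addRightEmbedding_apply]
    rw [R4 Q (by omega : i+1 ≤ j)]
    simp only [ht, pow_succ]
    ring
  -- combine W1 and W4
  have hcomb : ∑ i ∈ Finset.range n, ∑ j ∈ Finset.range (i+1), t i j
      + ∑ i ∈ Finset.range (n+1), ∑ j ∈ Finset.Ico (i+1) (n+1), t i j
      = DD (n+1) (hh Q n F) x := by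
    rw [Finset.sum_range_succ (fun i => ∑ j ∈ Finset.Ico (i+1) (n+1), t i j) n]
    simp only [Finset.Ico_self, Finset.sum_empty, add_zero]
    rw [← Finset.sum_add_distrib]
    have : ∀ i ∈ Finset.range n, (∑ j ∈ Finset.range (i+1), t i j)
        + ∑ j ∈ Finset.Ico (i+1) (n+1), t i j = ∑ j ∈ Finset.range (n+1), t i j := by
      intro i hi
      rw [Finset.mem_range] at hi
      simp only [Finset.range_eq_Ico]
      exact Finset.sum_Ico_consecutive _ (Nat.zero_le (i+1)) (by omega : i+1 ≤ n+1)
    rw [Finset.sum_congr rfl this, Finset.sum_comm]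
    rw [DD]
    refine Finset.sum_congr rfl fun j _ => ?_
    rw [hh, Finset.mul_sum]
    refine Finset.sum_congr rfl fun i _ => ?_
    simp only [ht]; ring
  rw [hW1, hW4, htel] at hW'
  linarith [hW']


def GInv (F : (ℕ → H) → ℤ) : Prop := ∀ (c : H) (x : ℕ → H), F (fun j => c * x j) = F x

noncomputable def dI (n : ℕ) (φ : (Fin n → H) → ℤ) :
    (Fin (n+1) → H) → ℤ := fun g =>
  φ (fun i => g i.succ) +
    ∑ j : Fin (n+1), (-1:ℤ)^((j:ℕ)+1) • φ (Fin.contractNth j (· * ·) g)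

def toSeq {n : ℕ} (g : Fin n → H) : ℕ → H := fun j => if h : j < n then g ⟨j, h⟩ else 1

def pp {n : ℕ} (g : Fin n → H) : ℕ → H := fun j => ((List.range j).map (toSeq g)).prod

def uu (n : ℕ) (φ : (Fin n → H) → ℤ) : (ℕ → H) → ℤ :=
  fun x => φ (fun i => (x i)⁻¹ * x ((i:ℕ)+1))

def vv (n : ℕ) (Z : (ℕ → H) → ℤ) : (Fin n → H) → ℤ := fun g => Z (pp g)

lemma uu_GInv (n : ℕ) (φ : (Fin n → H) → ℤ) : GInv (uu n φ) := by
  intro c x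
  unfold uu
  congr 1
  funext i
  simp [mul_assoc]

lemma uu_Dep (n : ℕ) (φ : (Fin n → H) → ℤ) : Dep n (uu n φ) := by
  intro x y h
  unfold uu
  congr 1
  funext i
  rw [h i (by omega : (i:ℕ) ≤ n), h ((i:ℕ)+1) (by omega)]

lemma pp_succ {n : ℕ} (g : Fin n → H) (j : ℕ) : pp g (j+1) = pp g j * toSeq g j := by
  unfold pp
  rw [List.range_succ, List.map_append, List.prod_append]
  simp

lemma pp_inv_mul {n : ℕ} (g : Fin n → H) (i : Fin n) :
    (pp g (i:ℕ))⁻¹ * pp g ((i:ℕ)+1) = g i := by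
  rw [pp_succ, inv_mul_cancel_left]
  simp [toSeq, i.isLt]

lemma uu_pp {n : ℕ} (φ : (Fin n → H) → ℤ) (g : Fin n → H) : uu n φ (pp g) = φ g := by
  unfold uu
  congr 1
  funext i
  exact pp_inv_mul g i

lemma toSeq_succ {n : ℕ} (g : Fin (n+1) → H) (j : ℕ) :
    toSeq g (j+1) = toSeq (fun t : Fin n => g t.succ) j := by
  unfold toSeq
  by_cases h : j < n
  · rw [dif_pos (by omega : j+1 < n+1), dif_pos h]
    congr 1
  · rw [dif_neg (by omega), dif_neg h]

lemma del_zero_pp {n : ℕ} (g : Fin (n+1) → H) :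
    del 0 (pp g) = fun j => g 0 * pp (fun t : Fin n => g t.succ) j := by
  funext j
  show pp g (j+1) = _
  induction j with
  | zero => simp [pp, toSeq, List.range_succ]
  | succ j ih =>
      rw [pp_succ, ih, pp_succ, mul_assoc, toSeq_succ]

lemma del_lt {i j : ℕ} (h : j < i) (x : ℕ → H) : del i x j = x j := if_pos h

lemma del_ge {i j : ℕ} (h : i ≤ j) (x : ℕ → H) : del i x j = x (j+1) :=
  if_neg (by omega)

lemma toSeq_lt {n : ℕ} (g : Fin n → H) {j : ℕ} (h : j < n) : toSeq g j = g ⟨j, h⟩ :=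
  dif_pos h

lemma pp_contract {n : ℕ} (g : Fin (n+1) → H) (j : Fin (n+1)) :
    ∀ m, m ≤ n → pp (Fin.contractNth j (· * ·) g) m = del ((j:ℕ)+1) (pp g) m := by
  have hj : (j:ℕ) ≤ n := by omega
  intro m
  induction m with
  | zero => intro _; rw [del_lt (by omega)]; simp [pp]
  | succ m ih =>
      intro hm
      have ihm := ih (by omega)
      rcases lt_trichotomy m (j:ℕ) with h1 | h1 | h1
      · -- m < j
        rw [pp_succ, ihm, del_lt (by omega : m < (j:ℕ)+1),
          del_lt (by omega : m+1 < (j:ℕ)+1), pp_succ]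
        congr 1
        rw [toSeq_lt _ (by omega : m < n), toSeq_lt _ (by omega : m < n+1),
          Fin.contractNth_apply_of_lt _ _ _ _ (by simpa using h1)]
        apply congrArg; apply Fin.ext; simp
      · -- m = j
        rw [pp_succ, ihm, del_lt (by omega : m < (j:ℕ)+1),
          del_ge (by omega : (j:ℕ)+1 ≤ m+1),
          show pp g (m+1+1) = pp g m * (toSeq g m * toSeq g (m+1)) by
            rw [pp_succ, pp_succ, mul_assoc]]
        congr 1
        rw [toSeq_lt _ (by omega : m < n), toSeq_lt _ (by omega : m < n+1),
          toSeq_lt _ (by omega : m+1 < n+1),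
          Fin.contractNth_apply_of_eq _ _ _ _ (by simpa using h1)]
        show g _ * g _ = g _ * g _
        congr 2 <;> apply Fin.ext <;> simp
      · -- m > j
        rw [pp_succ, ihm, del_ge (by omega : (j:ℕ)+1 ≤ m),
          del_ge (by omega : (j:ℕ)+1 ≤ m+1),
          show pp g (m+1+1) = pp g (m+1) * toSeq g (m+1) from pp_succ g (m+1)]
        congr 1
        rw [toSeq_lt _ (by omega : m < n), toSeq_lt _ (by omega : m+1 < n+1),
          Fin.contractNth_apply_of_gt _ _ _ _ (by simpa using h1)]
        apply congrArg; apply Fin.ext; simp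

lemma uu_dI (n : ℕ) (φ : (Fin n → H) → ℤ) (x : ℕ → H) :
    uu (n+1) (dI n φ) x = DD (n+2) (uu n φ) x := by
  set gx : Fin (n+1) → H := fun i => (x i)⁻¹ * x ((i:ℕ)+1) with hgx
  have h0 : uu n φ (del 0 x) = φ (fun i => gx i.succ) := by
    unfold uu
    apply congrArg
    funext t
    rw [del_ge (Nat.zero_le _), del_ge (Nat.zero_le _)]
    simp [hgx, Fin.val_succ]
  have hterm : ∀ j : Fin (n+1),
      (-1:ℤ)^((j:ℕ)+1) • φ (Fin.contractNth j (· * ·) gx)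
        = (-1:ℤ)^((j:ℕ)+1) * uu n φ (del ((j:ℕ)+1) x) := by
    intro j
    rw [smul_eq_mul]
    congr 1
    unfold uu
    congr 1
    funext t
    rcases lt_trichotomy (t:ℕ) (j:ℕ) with h | h | h
    · rw [Fin.contractNth_apply_of_lt _ _ _ _ h]
      simp only [hgx]
      rw [del_lt (by omega : (t:ℕ) < (j:ℕ)+1), del_lt (by omega : (t:ℕ)+1 < (j:ℕ)+1)]
      simp
    · rw [Fin.contractNth_apply_of_eq _ _ _ _ h]
      simp only [hgx]
      rw [del_lt (by omega : (t:ℕ) < (j:ℕ)+1), del_ge (by omega : (j:ℕ)+1 ≤ (t:ℕ)+1)]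
      simp only [Fin.coe_castSucc, Fin.val_succ]
      group
    · rw [Fin.contractNth_apply_of_gt _ _ _ _ h]
      simp only [hgx]
      rw [del_ge (by omega : (j:ℕ)+1 ≤ (t:ℕ)), del_ge (by omega : (j:ℕ)+1 ≤ (t:ℕ)+1)]
      simp [Fin.val_succ]
  show dI n φ gx = _
  unfold dI DD
  rw [Finset.sum_range_succ' (fun i => (-1:ℤ)^i * uu n φ (del i x)) (n+1)]
  simp only [pow_zero, one_mul, h0]
  rw [Finset.sum_congr rfl (fun j _ => hterm j),
    ← Fin.sum_univ_eq_sum_range (fun i => (-1:ℤ)^(i+1) * uu n φ (del (i+1) x)) (n+1)]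
  ring

lemma dI_vv (n : ℕ) (Z : (ℕ → H) → ℤ) (hinv : GInv Z) (hdep : Dep n Z)
    (g : Fin (n+1) → H) :
    dI n (vv n Z) g = DD (n+2) Z (pp g) := by
  have h0 : Z (del 0 (pp g)) = vv n Z (fun i => g i.succ) := by
    rw [del_zero_pp]
    exact hinv (g 0) _
  have hterm : ∀ j : Fin (n+1),
      (-1:ℤ)^((j:ℕ)+1) • vv n Z (Fin.contractNth j (· * ·) g)
        = (-1:ℤ)^((j:ℕ)+1) * Z (del ((j:ℕ)+1) (pp g)) := by
    intro j
    rw [smul_eq_mul]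
    congr 1
    exact hdep _ _ (pp_contract g j)
  unfold dI DD
  rw [Finset.sum_range_succ' (fun i => (-1:ℤ)^i * Z (del i (pp g))) (n+1)]
  simp only [pow_zero, one_mul, h0]
  rw [Finset.sum_congr rfl (fun j _ => hterm j),
    ← Fin.sum_univ_eq_sum_range (fun i => (-1:ℤ)^(i+1) * Z (del (i+1) (pp g))) (n+1)]
  ring

section Transfer

variable {G : Type} [Group G] (S : Subgroup G)

/-- the `S`-component of `g` w.r.t. the right coset decomposition -/
noncomputable def qG (g : G) : G :=
  g * (Quotient.mk (QuotientGroup.rightRel S) g).out⁻¹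

lemma qG_mem (g : G) : qG S g ∈ S := by
  have h : (QuotientGroup.rightRel S) (Quotient.mk (QuotientGroup.rightRel S) g).out g :=
    Quotient.exact (Quotient.out_eq _)
  rw [QuotientGroup.rightRel_apply] at h
  exact h

lemma out_eq_qG_inv_mul (g : G) :
    (Quotient.mk (QuotientGroup.rightRel S) g).out = (qG S g)⁻¹ * g := by
  unfold qG
  group

lemma mk_smul (s : G) (hs : s ∈ S) (g : G) :
    Quotient.mk (QuotientGroup.rightRel S) (s * g) =
      Quotient.mk (QuotientGroup.rightRel S) g := by
  exact Quotient.sound (QuotientGroup.rightRel_apply.mpr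
    (by simpa [mul_inv_rev, ← mul_assoc] using S.inv_mem hs))

lemma qG_smul (s : G) (hs : s ∈ S) (g : G) : qG S (s * g) = s * qG S g := by
  unfold qG
  rw [mk_smul S s hs g, mul_assoc]

lemma mk_out_mul (y c : G) :
    Quotient.mk (QuotientGroup.rightRel S)
        ((Quotient.mk (QuotientGroup.rightRel S) y).out * c) =
      Quotient.mk (QuotientGroup.rightRel S) (y * c) := by
  rw [out_eq_qG_inv_mul, mul_assoc]
  exact mk_smul S _ (S.inv_mem (qG_mem S y)) _

def SInvP (F : (ℕ → G) → ℤ) : Prop :=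
  ∀ s, s ∈ S → ∀ x : ℕ → G, F (fun j => s * x j) = F x

lemma F_out {F : (ℕ → G) → ℤ} (hF : SInvP S F) (y : G) (x : ℕ → G) :
    F (fun j => (Quotient.mk (QuotientGroup.rightRel S) y).out * x j)
      = F (fun j => y * x j) := by
  rw [show (fun j => (Quotient.mk (QuotientGroup.rightRel S) y).out * x j)
      = (fun j => (qG S y)⁻¹ * (y * x j)) by
    funext j; rw [out_eq_qG_inv_mul, mul_assoc]]
  exact hF _ (S.inv_mem (qG_mem S y)) _

variable [Finite G]

noncomputable local instance : Fintype (Quotient (QuotientGroup.rightRel S)) :=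
  Fintype.ofFinite _

/-- transfer -/
noncomputable def tr (F : (ℕ → G) → ℤ) : (ℕ → G) → ℤ :=
  fun x => ∑ q : Quotient (QuotientGroup.rightRel S), F (fun j => q.out * x j)

lemma tr_DD (r : ℕ) (F : (ℕ → G) → ℤ) : tr S (DD r F) = DD r (tr S F) := by
  funext x
  unfold tr DD
  rw [Finset.sum_comm]
  refine Finset.sum_congr rfl fun i _ => ?_
  rw [Finset.mul_sum]
  refine Finset.sum_congr rfl fun q _ => ?_
  rw [del_comp (fun h => q.out * h) i x]

lemma tr_add (F F' : (ℕ → G) → ℤ) :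
    tr S (fun x => F x + F' x) = fun x => tr S F x + tr S F' x := by
  funext x
  exact Finset.sum_add_distrib

lemma DD_add (r : ℕ) (F F' : (ℕ → G) → ℤ) :
    DD r (fun x => F x + F' x) = fun x => DD r F x + DD r F' x := by
  funext x
  unfold DD
  rw [← Finset.sum_add_distrib]
  refine Finset.sum_congr rfl fun i _ => ?_
  ring

/-- reindexing bijection on right cosets -/
noncomputable def rmulEquiv (c : G) :
    Quotient (QuotientGroup.rightRel S) ≃ Quotient (QuotientGroup.rightRel S) where
  toFun q := Quotient.mk _ (q.out * c)
  invFun q := Quotient.mk _ (q.out * c⁻¹)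
  left_inv q := by
    dsimp only
    rw [mk_out_mul S (q.out * c) c⁻¹, mul_assoc]
    simp [Quotient.out_eq]
  right_inv q := by
    dsimp only
    rw [mk_out_mul S (q.out * c⁻¹) c, mul_assoc]
    simp [Quotient.out_eq]

lemma tr_GInv {F : (ℕ → G) → ℤ} (hF : SInvP S F) : GInv (tr S F) := by
  intro c x
  unfold tr
  rw [← Equiv.sum_comp (rmulEquiv S c)
    (fun q => F (fun j => q.out * x j))]
  refine Finset.sum_congr rfl fun q _ => ?_
  have h1 : F (fun j => ((rmulEquiv S c) q).out * x j)
      = F (fun j => (q.out * c) * x j) := F_out S hF _ x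
  rw [h1]
  congr 1
  funext j
  rw [mul_assoc]

lemma tr_smulFact {F : (ℕ → G) → ℤ} (hF : GInv F) :
    tr S F = fun x => (S.index : ℤ) * F x := by
  funext x
  unfold tr
  have h1 : ∀ q : Quotient (QuotientGroup.rightRel S),
      F (fun j => q.out * x j) = F x := fun q => hF q.out x
  rw [Finset.sum_congr rfl fun q _ => h1 q, Finset.sum_const, Finset.card_univ]
  have hcard : Fintype.card (Quotient (QuotientGroup.rightRel S)) = S.index := by
    rw [← Nat.card_eq_fintype_card,
      Nat.card_congr (QuotientGroup.quotientRightRelEquivQuotientLeftRel S)]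
    rfl
  rw [hcard]
  simp [zsmul_eq_mul]

lemma tr_Dep {n : ℕ} {F : (ℕ → G) → ℤ} (hF : Dep n F) : Dep n (tr S F) := by
  intro x y h
  unfold tr
  refine Finset.sum_congr rfl fun q _ => ?_
  exact hF _ _ fun m hm => by rw [h m hm]

lemma PP_smul (s : G) (hs : s ∈ S) (i : ℕ) (x : ℕ → G) :
    PP (qG S) i (fun j => s * x j) = fun j => s * PP (qG S) i x j := by
  funext j
  unfold PP
  split_ifs
  · exact qG_smul S s hs (x j)
  · rfl

lemma hh_SInvP {r : ℕ} {F : (ℕ → G) → ℤ} (hF : SInvP S F) :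
    SInvP S (hh (qG S) r F) := by
  intro s hs x
  unfold hh
  refine Finset.sum_congr rfl fun i _ => ?_
  rw [PP_smul S s hs i x, hF s hs]

lemma hh_Dep {n : ℕ} {F : (ℕ → G) → ℤ} (hF : Dep (n+1) F) :
    Dep n (hh (qG S) (n+1) F) := by
  intro x y h
  unfold hh
  refine Finset.sum_congr rfl fun i hi => ?_
  rw [Finset.mem_range] at hi
  congr 1
  refine hF _ _ fun m hm => ?_
  unfold PP
  split_ifs with h'
  · rw [h m (by omega)]
  · rw [h (m-1) (by omega)]

/-- the `S`-valued component map -/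
noncomputable def qS (g : G) : S := ⟨qG S g, qG_mem S g⟩

/-- extension of a function on `S`-sequences to `G`-sequences -/
noncomputable def EE (F : (ℕ → S) → ℤ) : (ℕ → G) → ℤ :=
  fun x => F (fun j => qS S (x j))

lemma EE_DD (r : ℕ) (F : (ℕ → S) → ℤ) : EE S (DD r F) = DD r (EE S F) := by
  funext x
  unfold EE DD
  refine Finset.sum_congr rfl fun i _ => ?_
  rw [del_comp (fun h => qS S h) i x]

lemma EE_SInvP {F : (ℕ → S) → ℤ} (hF : GInv F) : SInvP S (EE S F) := by
  intro s hs x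
  unfold EE
  rw [show (fun j => qS S (s * x j)) = fun j => (⟨s, hs⟩ : S) * qS S (x j) by
    funext j
    exact Subtype.ext (qG_smul S s hs (x j))]
  exact hF ⟨s, hs⟩ _

lemma EE_Dep {n : ℕ} {F : (ℕ → S) → ℤ} (hF : Dep n F) : Dep n (EE S F) := by
  intro x y h
  exact hF _ _ fun m hm => by rw [h m hm]

end Transfer

section Core

variable {G : Type} [Group G] [Finite G] (S : Subgroup G)

theorem core (n : ℕ) (φ : (Fin (n+1) → G) → ℤ) (hφ : dI (n+1) φ = 0)
    (η : (Fin n → ↥S) → ℤ)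
    (hη : dI n η = fun g : Fin (n+1) → ↥S => φ (fun i => (g i : G))) :
    ∃ ζ : (Fin n → G) → ℤ, dI n ζ = fun g => (S.index : ℤ) * φ g := by
  set F := uu (n+1) φ with hF
  have hFdep : Dep (n+1) F := uu_Dep _ _
  have hFG : GInv F := uu_GInv _ _
  have hFS : SInvP S F := fun s hs x => hFG s x
  have hco : ∀ y, DD (n+3) F y = 0 := by
    intro y
    have h := (uu_dI (n+1) φ y).symm
    rw [hφ] at h
    simpa [uu] using h
  have hkey : ∀ x, DD (n+2) (hh (qG S) (n+1) F) x = F x - F (fun m => qG S (x m)) :=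
    key (qG S) (n+1) F hFdep hco
  have hrs : (fun y : ℕ → S => F (fun j => (y j : G))) = DD (n+2) (uu n η) := by
    funext y
    have h1 : F (fun j => ((y j : S) : G)) =
        uu (n+1) (fun g : Fin (n+1) → ↥S => φ (fun i => (g i : G))) y := by
      rfl
    rw [h1, ← hη, uu_dI]
  have hEq : ∀ x : ℕ → G, F (fun m => qG S (x m)) = EE S (DD (n+2) (uu n η)) x := by
    intro x
    rw [← hrs]
    rfl
  set W : (ℕ → G) → ℤ := fun x => hh (qG S) (n+1) F x + EE S (uu n η) x with hW
  have hFW : ∀ x, F x = DD (n+2) W x := by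
    intro x
    rw [hW, DD_add (n+2) (hh (qG S) (n+1) F) (EE S (uu n η))]
    have h3 := hkey x
    rw [hEq x, EE_DD] at h3
    show F x = DD (n+2) (hh (qG S) (n+1) F) x + DD (n+2) (EE S (uu n η)) x
    linarith
  have hWS : SInvP S W := by
    intro s hs x
    rw [hW]
    show hh (qG S) (n+1) F _ + EE S (uu n η) _ = _
    rw [hh_SInvP S hFS s hs x, EE_SInvP S (uu_GInv n η) s hs x]
  have hWdep : Dep n W := by
    intro x y h
    rw [hW]
    show hh (qG S) (n+1) F _ + EE S (uu n η) _ = _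
    rw [hh_Dep S hFdep x y h, EE_Dep S (uu_Dep n η) x y h]
  refine ⟨vv n (tr S W), ?_⟩
  funext g
  rw [dI_vv n (tr S W) (tr_GInv S hWS) (tr_Dep S hWdep) g]
  have hDD : DD (n+2) (tr S W) = tr S (DD (n+2) W) := (tr_DD S (n+2) W).symm
  rw [hDD]
  have h2 : DD (n+2) W = F := funext fun x => (hFW x).symm
  rw [h2, tr_smulFact S hFG]
  show (S.index : ℤ) * F (pp g) = _
  rw [hF, uu_pp]

end Core
section Plumbing

open CategoryTheory

theorem dI_eq {H : Type} [Group H] (n : ℕ) (φ : (Fin n → H) → ℤ) (g : Fin (n+1) → H) :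
    (groupCohomology.inhomogeneousCochains (Rep.trivial ℤ H ℤ)).d n (n+1) φ g = dI n φ g := by
  rw [groupCohomology.inhomogeneousCochains.d_def]
  rw [inhomogeneousCochains.d_hom_apply]
  simp only [Rep.trivial_ρ_apply, Representation.trivial_apply, LinearMap.id_apply, dI]

variable {R : Type} [Ring R]

lemma iso_inv_hom_apply {X Y : ModuleCat R} (e : X ≅ Y) (x : X) : e.inv (e.hom x) = x :=
  e.hom_inv_id_apply x

lemma iso_hom_inv_apply {X Y : ModuleCat R} (e : X ≅ Y) (y : Y) : e.hom (e.inv y) = y :=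
  e.inv_hom_id_apply y

lemma SCmap_mk {SC₁ SC₂ : ShortComplex (ModuleCat R)} (τ : SC₁ ⟶ SC₂)
    (z : SC₁.X₂) (hz : z ∈ LinearMap.ker SC₁.g.hom)
    (hz2 : τ.τ₂ z ∈ LinearMap.ker SC₂.g.hom) :
    SC₂.moduleCatHomologyIso.hom (ShortComplex.homologyMap τ
      (SC₁.moduleCatHomologyIso.inv (Submodule.Quotient.mk ⟨z, hz⟩)))
    = Submodule.Quotient.mk ⟨τ.τ₂ z, hz2⟩ := by
  set c₁ := SC₁.moduleCatCyclesIso.inv ⟨z, hz⟩ with hc₁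
  have hπ : SC₁.moduleCatHomologyIso.inv (Submodule.Quotient.mk ⟨z, hz⟩)
      = SC₁.homologyπ c₁ :=
    (ConcreteCategory.congr_hom (ShortComplex.moduleCatCyclesIso_inv_π SC₁)
      (⟨z, hz⟩ : LinearMap.ker SC₁.g.hom)).symm
  have h2 : ShortComplex.homologyMap τ (SC₁.homologyπ c₁)
      = SC₂.homologyπ (ShortComplex.cyclesMap τ c₁) :=
    ConcreteCategory.congr_hom (ShortComplex.homologyπ_naturality τ) c₁
  have h3 : ShortComplex.cyclesMap τ c₁ = SC₂.moduleCatCyclesIso.inv ⟨τ.τ₂ z, hz2⟩ := by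
    have e1 : SC₂.moduleCatCyclesIso.hom (ShortComplex.cyclesMap τ c₁) = ⟨τ.τ₂ z, hz2⟩ := by
      apply Subtype.ext
      have e2 : (LinearMap.ker SC₂.g.hom).subtype
          (SC₂.moduleCatCyclesIso.hom (ShortComplex.cyclesMap τ c₁))
          = SC₂.iCycles (ShortComplex.cyclesMap τ c₁) :=
        ConcreteCategory.congr_hom (ShortComplex.moduleCatCyclesIso_hom_i SC₂)
          (ShortComplex.cyclesMap τ c₁)
      have e3 : SC₂.iCycles (ShortComplex.cyclesMap τ c₁) = τ.τ₂ (SC₁.iCycles c₁) :=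
        ConcreteCategory.congr_hom (ShortComplex.cyclesMap_i τ) c₁
      have e4 : SC₁.iCycles c₁ = z :=
        ConcreteCategory.congr_hom (ShortComplex.moduleCatCyclesIso_inv_iCycles SC₁)
          (⟨z, hz⟩ : LinearMap.ker SC₁.g.hom)
      show (LinearMap.ker SC₂.g.hom).subtype
        (SC₂.moduleCatCyclesIso.hom (ShortComplex.cyclesMap τ c₁)) = τ.τ₂ z
      rw [e2, e3, e4]
    rw [← e1, iso_inv_hom_apply]
  have h5 : SC₂.homologyπ (SC₂.moduleCatCyclesIso.inv ⟨τ.τ₂ z, hz2⟩)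
      = SC₂.moduleCatHomologyIso.inv (Submodule.Quotient.mk ⟨τ.τ₂ z, hz2⟩) :=
    ConcreteCategory.congr_hom (ShortComplex.moduleCatCyclesIso_inv_π SC₂)
      (⟨τ.τ₂ z, hz2⟩ : LinearMap.ker SC₂.g.hom)
  rw [hπ, h2, h3, h5]
  exact iso_hom_inv_apply _ _

lemma mk_eq_zero_of_boundary {SC : ShortComplex (ModuleCat R)} (w : SC.X₁) (z : SC.X₂)
    (hz : z ∈ LinearMap.ker SC.g.hom) (hw : SC.f w = z) :
    (Submodule.Quotient.mk ⟨z, hz⟩ :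
      LinearMap.ker SC.g.hom ⧸ LinearMap.range SC.moduleCatToCycles) = 0 :=
  (Submodule.Quotient.mk_eq_zero _).2 ⟨w, Subtype.ext hw⟩

lemma homologyMap_sc' {K L : HomologicalComplex (ModuleCat R) (ComplexShape.up ℕ)}
    (Ψ : K ⟶ L) (i j k : ℕ) (hi : (ComplexShape.up ℕ).prev j = i)
    (hk : (ComplexShape.up ℕ).next j = k) :
    HomologicalComplex.homologyMap Ψ j ≫ (L.homologyIsoSc' i j k hi hk).hom
      = (K.homologyIsoSc' i j k hi hk).hom ≫
        ShortComplex.homologyMap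
          ((HomologicalComplex.shortComplexFunctor' (ModuleCat R) (ComplexShape.up ℕ) i j k).map Ψ) := by
  show ShortComplex.homologyMap _ ≫ ShortComplex.homologyMap _
      = ShortComplex.homologyMap _ ≫ ShortComplex.homologyMap _
  rw [← ShortComplex.homologyMap_comp, ← ShortComplex.homologyMap_comp]
  congr 1
  exact (HomologicalComplex.natIsoSc' (ModuleCat R) (ComplexShape.up ℕ) i j k hi hk).hom.naturality Ψ

end Plumbing
end ResAux

open ResAux

theorem res_injective_on_p_primary
    (G : Type) [Group G] [Finite G] (p : ℕ) (hp : p.Prime) (S : Subgroup G)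
    (hS : ¬ p ∣ S.index) (k : ℕ)
    (x : groupCohomology (Rep.trivial ℤ G ℤ) k)
    (hx : ∃ m : ℕ, addOrderOf x = p ^ m)
    (h0 : HomologicalComplex.homologyMap (resCochainMap G S) k x = 0) :
    x = 0 := by
  classical
  set K := groupCohomology.inhomogeneousCochains (Rep.trivial ℤ G ℤ) with hK
  set L := groupCohomology.inhomogeneousCochains (Rep.trivial ℤ ↥S ℤ) with hL
  have hiK : (ComplexShape.up ℕ).prev k = k - 1 := by
    cases k with
    | zero => simpa using CochainComplex.prev_nat_zero
    | succ n => simpa using CochainComplex.prev_nat_succ n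
  have hkK : (ComplexShape.up ℕ).next k = k + 1 := CochainComplex.next ℕ k
  set eK := K.homologyIsoSc' (k-1) k (k+1) hiK hkK with heK
  set eL := L.homologyIsoSc' (k-1) k (k+1) hiK hkK with heL
  set mK := (K.sc' (k-1) k (k+1)).moduleCatHomologyIso with hmK
  set mL := (L.sc' (k-1) k (k+1)).moduleCatHomologyIso with hmL
  obtain ⟨⟨z, hz⟩, hzz⟩ := Submodule.Quotient.mk_surjective _ (mK.hom (eK.hom x))
  have hx_eq : x = eK.inv (mK.inv (Submodule.Quotient.mk ⟨z, hz⟩)) := by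
    rw [hzz]
    exact ((congrArg (fun y => eK.inv y) (iso_inv_hom_apply mK (eK.hom x))).trans
      (iso_inv_hom_apply eK x)).symm
  have hz' : K.d k (k+1) z = 0 := hz
  have hz2 : (resCochainMap G S).f k z ∈ LinearMap.ker ((L.sc' (k-1) k (k+1)).g.hom) := by
    show L.d k (k+1) ((resCochainMap G S).f k z) = 0
    have hc := ConcreteCategory.congr_hom ((resCochainMap G S).comm k (k+1)) z
    have hc' : L.d k (k+1) ((resCochainMap G S).f k z)
        = (resCochainMap G S).f (k+1) (K.d k (k+1) z) := hc
    rw [hc', hz']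
    exact map_zero _
  set τ := (HomologicalComplex.shortComplexFunctor' (ModuleCat ℤ)
    (ComplexShape.up ℕ) (k-1) k (k+1)).map (resCochainMap G S) with hτ
  have hres : mL.hom (eL.hom (HomologicalComplex.homologyMap (resCochainMap G S) k x))
      = Submodule.Quotient.mk ⟨(resCochainMap G S).f k z, hz2⟩ := by
    rw [hx_eq]
    have h7 := ConcreteCategory.congr_hom
      (homologyMap_sc' (resCochainMap G S) (k-1) k (k+1) hiK hkK)
      (eK.inv (mK.inv (Submodule.Quotient.mk ⟨z, hz⟩)))
    have h8 : eL.hom (HomologicalComplex.homologyMap (resCochainMap G S) k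
        (eK.inv (mK.inv (Submodule.Quotient.mk ⟨z, hz⟩))))
        = ShortComplex.homologyMap τ
            (eK.hom (eK.inv (mK.inv (Submodule.Quotient.mk ⟨z, hz⟩)))) := h7
    rw [h8, iso_hom_inv_apply]
    exact SCmap_mk τ z hz hz2
  rw [h0, map_zero, map_zero] at hres
  obtain ⟨w, hw⟩ := (Submodule.Quotient.mk_eq_zero _).1 hres.symm
  have hw' : L.d (k-1) k w = (resCochainMap G S).f k z := congrArg Subtype.val hw
  cases k with
  | zero =>
      have hd0 : L.d 0 0 w = 0 := by
        rw [L.shape 0 0 (by simp [ComplexShape.up_Rel])]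
        rfl
      have hrz : (resCochainMap G S).f 0 z = 0 := by
        rw [← hw']
        exact hd0
      have hz0 : z = (0 : ((K.sc' 0 0 1).X₂)) := by
        funext g
        have h9 := congrFun hrz (fun i : Fin 0 => i.elim0)
        have h10 : z g = ((resCochainMap G S).f 0) z (fun i : Fin 0 => i.elim0) := by
          show z g = z _
          congr 1
          exact Subsingleton.elim _ _
        rw [h10, h9]
        rfl
      rw [hx_eq]
      have : (Submodule.Quotient.mk ⟨z, hz⟩ :
          LinearMap.ker ((K.sc' 0 0 1).g.hom) ⧸
            LinearMap.range (K.sc' 0 0 1).moduleCatToCycles) = 0 := by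
        rw [show (⟨z, hz⟩ : LinearMap.ker ((K.sc' 0 0 1).g.hom)) = 0 from Subtype.ext hz0]
        exact (Submodule.Quotient.mk_eq_zero _).2 (zero_mem _)
      rw [this]
      erw [map_zero, map_zero]
      rfl
  | succ n =>
      -- translate to dI
      have hzd : dI (n+1) z = 0 := by
        funext g
        exact (dI_eq (n+1) z g).symm.trans (congrFun hz' g)
      have hwd : dI n w = fun g : Fin (n+1) → ↥S => z (fun i => ((g i : S) : G)) := by
        funext g
        exact (dI_eq n w g).symm.trans (congrFun hw' g)
      obtain ⟨ζ, hζ⟩ := core S n z hzd w hwd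
      have hζ' : (K.sc' n (n+1) (n+2)).f ζ = (S.index : ℤ) • z := by
        show K.d n (n+1) ζ = (S.index : ℤ) • z
        funext g
        exact (dI_eq n ζ g).trans (congrFun hζ g)
      have hz3 : (S.index : ℤ) • z ∈ LinearMap.ker ((K.sc' n (n+1) (n+2)).g.hom) := by
        show K.d (n+1) (n+2) ((S.index : ℤ) • z) = 0
        erw [map_smul, hz', smul_zero]
      have hmk0 : ((S.index : ℤ) • (Submodule.Quotient.mk ⟨z, hz⟩ :
          LinearMap.ker ((K.sc' n (n+1) (n+2)).g.hom) ⧸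
            LinearMap.range (K.sc' n (n+1) (n+2)).moduleCatToCycles)) = 0 := by
        rw [← Submodule.Quotient.mk_smul]
        exact mk_eq_zero_of_boundary ζ _ hz3 hζ'
      have hb : (S.index : ℤ) • x = 0 := by
        have e1 : mK.inv ((S.index : ℤ) • (Submodule.Quotient.mk ⟨z, hz⟩ :
            LinearMap.ker ((K.sc' n (n+1) (n+2)).g.hom) ⧸
              LinearMap.range (K.sc' n (n+1) (n+2)).moduleCatToCycles))
            = (S.index : ℤ) • mK.inv (Submodule.Quotient.mk ⟨z, hz⟩) := by
          have h := (mK.inv).hom.map_smul ((S.index : ℤ))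
            (Submodule.Quotient.mk ⟨z, hz⟩ :
              LinearMap.ker ((K.sc' n (n+1) (n+2)).g.hom) ⧸
                LinearMap.range (K.sc' n (n+1) (n+2)).moduleCatToCycles)
          exact h.trans (int_smul_eq_zsmul _ _ _)
        have e2 : eK.inv ((S.index : ℤ) • mK.inv (Submodule.Quotient.mk ⟨z, hz⟩))
            = (S.index : ℤ) • eK.inv (mK.inv (Submodule.Quotient.mk ⟨z, hz⟩)) := by
          have h := (eK.inv).hom.map_smul ((S.index : ℤ))
            (mK.inv (Submodule.Quotient.mk ⟨z, hz⟩))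
          exact map_zsmul (ConcreteCategory.hom eK.inv) _ _
        rw [hx_eq]
        erw [← e2, ← e1, hmk0, map_zero, map_zero]
        rfl
      have hb' : S.index • x = 0 := by
        rw [← natCast_zsmul]
        exact hb
      have hdvd : addOrderOf x ∣ S.index := addOrderOf_dvd_of_nsmul_eq_zero hb'
      obtain ⟨m, hm⟩ := hx
      cases Nat.eq_zero_or_pos m with
      | inl h =>
          subst h
          rw [pow_zero] at hm
          exact AddMonoid.addOrderOf_eq_one_iff.mp hm
      | inr h =>
          exfalso
          apply hS
          calc p ∣ p ^ m := dvd_pow_self p (by omega)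
            _ = addOrderOf x := hm.symm
            _ ∣ S.index := hdvd
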